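/- η-greedy variant of the rollout bound: under the hypotheses of the rollout performance bound, except that the policy π satisfies only the η-approximate greedy condition f(x', π(x')) + ∫ V(F(x', π(x'), w)) dμ(w) ≤ (TV)(x') + η for every nonterminal x' (for some η ≥ 0), and π is proper from x, it holds that J^π(x) − V*(x) ≤ (2ε + η) · E[τ]. -/

import Mathlib

open MeasureTheory ProbabilityTheory Filter
open scoped ENNReal

open Classical in
/-- Bellman operator of the SSP: `(T V)(x) = inf_{u ∈ U(x)} ( f(x,u) + ∫ V(F(x,u,w)) dμ(w) )`
for nonterminal `x`, and `(T V)(t) = 0`. -/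
noncomputable def bellman {X U W : Type*} [MeasurableSpace W] (μ : Measure W)
    (t : X) (Ua : X → Set U) (f : X → U → ℝ) (F : X → U → W → X)
    (V : X → ℝ) (x : X) : ℝ :=
  if x = t then 0 else ⨅ u : Ua x, (f x (u : U) + ∫ w, V (F x (u : U) w) ∂μ)

/-- Closed-loop trajectory driven by a disturbance sequence `ω : ℕ → W`:
`x₀ = x`, `x_{k+1} = F(x_k, π(x_k), ω_k)`. -/
def traj {X U W : Type*} (F : X → U → W → X) (π : X → U) (x : X) (ω : ℕ → W) : ℕ → X
  | 0 => x
  | k + 1 => F (traj F π x ω k) (π (traj F π x ω k)) (ω k)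

/-- The trajectory as a family of random variables on an abstract sample space `Ω`,
given the disturbance random variables `ξ k : Ω → W`. -/
def trajOn {X U W Ω : Type*} (F : X → U → W → X) (π : X → U) (x : X)
    (ξ : ℕ → Ω → W) (k : ℕ) (ω : Ω) : X :=
  traj F π x (fun i => ξ i ω) k

/-- Hitting time `τ = inf { k ≥ 0 : x_k = t }` of the terminal state (`∞` if never reached),
valued in `ℝ≥0∞`. -/
noncomputable def hitTime {X Ω : Type*} (t : X) (Y : ℕ → Ω → X) (ω : Ω) : ℝ≥0∞ :=
  ⨅ (k : ℕ) (_ : Y k ω = t), (k : ℝ≥0∞)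

/-- Total expected cost `J = E[ Σ_{k=0}^{τ-1} f(x_k, π(x_k)) ]` (in `ℝ≥0∞`; the stage cost
is nonnegative). -/
noncomputable def totalCost {X U Ω : Type*} [MeasurableSpace Ω] (P : Measure Ω)
    (t : X) (f : X → U → ℝ) (π : X → U) (Y : ℕ → Ω → X) : ℝ≥0∞ :=
  ∫⁻ ω, ∑' (k : ℕ), (if (k : ℝ≥0∞) < hitTime t Y ω
    then ENNReal.ofReal (f (Y k ω) (π (Y k ω))) else 0) ∂P

/-- Expected hitting time `E[τ]` (in `ℝ≥0∞`). -/
noncomputable def expHit {X Ω : Type*} [MeasurableSpace Ω] (P : Measure Ω)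
    (t : X) (Y : ℕ → Ω → X) : ℝ≥0∞ :=
  ∫⁻ ω, hitTime t Y ω ∂P

lemma traj_congr {X U W : Type*} (F : X → U → W → X) (π : X → U) (x : X)
    {ω ω' : ℕ → W} : ∀ k, (∀ i < k, ω i = ω' i) → traj F π x ω k = traj F π x ω' k
  | 0, _ => rfl
  | k + 1, h => by
    have ih := traj_congr F π x k (fun i hi => h i (Nat.lt_succ_of_lt hi))
    simp only [traj, ih, h k (Nat.lt_succ_self k)]

lemma measurable_traj {X U W : Type*} [MeasurableSpace X] [MeasurableSpace U] [MeasurableSpace W]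
    {F : X → U → W → X} {π : X → U}
    (hF : Measurable fun p : X × U × W => F p.1 p.2.1 p.2.2) (hπ : Measurable π) (x : X) :
    ∀ k, Measurable fun ω : ℕ → W => traj F π x ω k
  | 0 => measurable_const
  | k + 1 => by
    have ih := measurable_traj hF hπ x k
    have hstep : Measurable fun p : X × W => F p.1 (π p.1) p.2 :=
      hF.comp (measurable_fst.prodMk ((hπ.comp measurable_fst).prodMk measurable_snd))
    exact hstep.comp (ih.prodMk (measurable_pi_apply k))

lemma integrable_of_bound {Ω : Type*} [MeasurableSpace Ω] {P : Measure Ω} [IsFiniteMeasure P]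
    (h : Ω → ℝ) (hm : AEStronglyMeasurable h P) (C : ℝ) (hb : ∀ ω, |h ω| ≤ C) :
    Integrable h P :=
  (integrable_const C).mono' hm (Eventually.of_forall (by simpa [Real.norm_eq_abs] using hb))

/-- η-greedy variant of the rollout bound: if the policy `π` is only η-approximately greedy,
i.e. `f(x', π(x')) + ∫ V(F(x', π(x'), w)) dμ(w) ≤ (T V)(x') + η` at every nonterminal `x'`,
and `π` is proper from `x`, then `J^π(x) - V*(x) ≤ (2ε + η) · E[τ]`, stated in `EReal`. -/
theorem rollout_bound_eta_greedy
    {X U W Ω : Type*} [MeasurableSpace X] [MeasurableSingletonClass X]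
    [MeasurableSpace U] [MeasurableSpace W] [MeasurableSpace Ω]
    (μ : Measure W) [IsProbabilityMeasure μ] (P : Measure Ω) [IsProbabilityMeasure P]
    (t : X) (u0 : U) (Ua : X → Set U) (F : X → U → W → X) (f : X → U → ℝ)
    -- SSP model: nonempty control sets, nonnegative measurable stage cost, measurable dynamics,
    -- absorbing cost-free terminal state
    (hUne : ∀ y, (Ua y).Nonempty) (hfnn : ∀ y u, 0 ≤ f y u)
    (hFmeas : Measurable fun p : X × U × W => F p.1 p.2.1 p.2.2)
    (hfmeas : Measurable fun p : X × U => f p.1 p.2)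
    (hUt : Ua t = {u0}) (hft : f t u0 = 0) (hFt : ∀ w, F t u0 w = t)
    -- V* : bounded measurable, V*(t)=0, Bellman fixed point, well-defined one-step integrals
    (Vstar : X → ℝ) (hVsmeas : Measurable Vstar) (hVsbdd : ∃ C, ∀ y, |Vstar y| ≤ C)
    (hVst : Vstar t = 0) (hVsfix : ∀ y, Vstar y = bellman μ t Ua f F Vstar y)
    (hVsint : ∀ y u, Integrable (fun w => Vstar (F y u w)) μ)
    -- V : bounded measurable surrogate with V(t)=0 and ‖V - V*‖∞ ≤ ε
    (V : X → ℝ) (hVmeas : Measurable V) (hVbdd : ∃ C, ∀ y, |V y| ≤ C) (hVt : V t = 0)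
    (hVint : ∀ y u, Integrable (fun w => V (F y u w)) μ)
    (ε : ℝ) (hε : 0 ≤ ε) (happrox : ∀ y, |V y - Vstar y| ≤ ε)
    (π : X → U) (hπmeas : Measurable π) (hπt : π t = u0)
    (η : ℝ) (hη : 0 ≤ η)
    (hηgreedy : ∀ y, y ≠ t → π y ∈ Ua y ∧
      f y (π y) + ∫ w, V (F y (π y) w) ∂μ ≤ bellman μ t Ua f F V y + η)
    -- i.i.d. disturbance sequence with common law μ on an abstract probability space
    (ξ : ℕ → Ω → W) (hξmeas : ∀ k, Measurable (ξ k))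
    (hξindep : iIndepFun ξ P)
    (hξlaw : ∀ k, P.map (ξ k) = μ)
    -- properness of the closed loop from x: τ < ∞ a.s. and J(x) < ∞
    (x : X)
    (hproper_tau : ∀ᵐ ω ∂P, hitTime t (trajOn F π x ξ) ω < ⊤)
    (hproper_J : totalCost P t f π (trajOn F π x ξ) < ⊤) :
    (totalCost P t f π (trajOn F π x ξ) : EReal)
      ≤ (Vstar x : EReal) +
        ((ENNReal.ofReal (2 * ε + η) * expHit P t (trajOn F π x ξ) : ℝ≥0∞) : EReal) := by
  classical
  obtain ⟨C₀, hC₀⟩ := hVsbdd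
  set C := max C₀ 0 with hCdef
  have hC : ∀ y, |Vstar y| ≤ C := fun y => (hC₀ y).trans (le_max_left _ _)
  have hC0 : (0:ℝ) ≤ C := le_max_right _ _
  obtain ⟨D₀, hD₀⟩ := hVbdd
  set D := max D₀ 0 with hDdef
  have hD : ∀ y, |V y| ≤ D := fun y => (hD₀ y).trans (le_max_left _ _)
  set c := 2 * ε + η with hc
  have hc0 : (0:ℝ) ≤ c := by positivity
  -- integral bounds
  have hVsintbd : ∀ y u, |∫ w, Vstar (F y u w) ∂μ| ≤ C := by
    intro y u
    calc |∫ w, Vstar (F y u w) ∂μ| ≤ ∫ w, |Vstar (F y u w)| ∂μ := by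
          simpa [Real.norm_eq_abs] using
            norm_integral_le_integral_norm (fun w => Vstar (F y u w)) (μ := μ)
      _ ≤ ∫ _w, C ∂μ := integral_mono (hVsint y u).abs (integrable_const C)
          (fun w => hC _)
      _ = C := by simp
  have hVintbd : ∀ y u, |∫ w, V (F y u w) ∂μ| ≤ D := by
    intro y u
    calc |∫ w, V (F y u w) ∂μ| ≤ ∫ w, |V (F y u w)| ∂μ := by
          simpa [Real.norm_eq_abs] using
            norm_integral_le_integral_norm (fun w => V (F y u w)) (μ := μ)
      _ ≤ ∫ _w, D ∂μ := integral_mono (hVint y u).abs (integrable_const D) (fun w => hD _)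
      _ = D := by simp
  have hVle : ∀ z, Vstar z ≤ V z + ε := by
    intro z; have := happrox z; rw [abs_le] at this; linarith [this.1]
  have hVle' : ∀ z, V z ≤ Vstar z + ε := by
    intro z; have := happrox z; rw [abs_le] at this; linarith [this.2]
  have intVsV : ∀ y u, ∫ w, Vstar (F y u w) ∂μ ≤ (∫ w, V (F y u w) ∂μ) + ε := by
    intro y u
    have h : ∫ w, Vstar (F y u w) ∂μ ≤ ∫ w, (V (F y u w) + ε) ∂μ :=
      integral_mono (hVsint y u) ((hVint y u).add (integrable_const ε))
        (fun w => hVle (F y u w))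
    rwa [integral_add (hVint y u) (integrable_const ε), integral_const, probReal_univ,
      one_smul] at h
  have intVVs : ∀ y u, ∫ w, V (F y u w) ∂μ ≤ (∫ w, Vstar (F y u w) ∂μ) + ε := by
    intro y u
    have h : ∫ w, V (F y u w) ∂μ ≤ ∫ w, (Vstar (F y u w) + ε) ∂μ :=
      integral_mono (hVint y u) ((hVsint y u).add (integrable_const ε))
        (fun w => hVle' (F y u w))
    rwa [integral_add (hVsint y u) (integrable_const ε), integral_const, probReal_univ,
      one_smul] at h
  -- bellman V ≤ Vstar + ε on nonterminal states
  have hbellV : ∀ y, y ≠ t → bellman μ t Ua f F V y ≤ Vstar y + ε := by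
    intro y hy
    have hne : Nonempty (Ua y) := (hUne y).to_subtype
    have key : ∀ δ : ℝ, 0 < δ → bellman μ t Ua f F V y ≤ Vstar y + ε + δ := by
      intro δ hδ
      have hlt : (⨅ u : Ua y, (f y (u : U) + ∫ w, Vstar (F y (u : U) w) ∂μ)) < Vstar y + δ := by
        have hfix := hVsfix y
        rw [bellman, if_neg hy] at hfix
        rw [← hfix]; linarith
      obtain ⟨u, hu⟩ := exists_lt_of_ciInf_lt hlt
      have hbdd : BddBelow (Set.range fun u : Ua y => f y (u : U) + ∫ w, V (F y (u : U) w) ∂μ) := by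
        refine ⟨-D, ?_⟩
        rintro _ ⟨u, rfl⟩
        have h1 := hVintbd y (u : U)
        have h2 := hfnn y (u : U)
        rw [abs_le] at h1
        show -D ≤ f y (u : U) + ∫ w, V (F y (u : U) w) ∂μ
        linarith [h1.1]
      have h2 : bellman μ t Ua f F V y ≤ f y (u : U) + ∫ w, V (F y (u : U) w) ∂μ := by
        rw [bellman, if_neg hy]; exact ciInf_le hbdd u
      have h3 := intVVs y (u : U)
      linarith
    by_contra h
    push_neg at h
    have := key ((bellman μ t Ua f F V y - (Vstar y + ε)) / 2) (by linarith)
    linarith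
  -- the one-step Lyapunov inequality
  have hstep : ∀ y, f y (π y) + ∫ w, Vstar (F y (π y) w) ∂μ
      ≤ Vstar y + (if y = t then 0 else c) := by
    intro y
    by_cases hy : y = t
    · subst hy
      simp [hπt, hft, hFt, hVst]
    · rw [if_neg hy]
      have h1 := (hηgreedy y hy).2
      have h2 := hbellV y hy
      have h3 := intVsV y (π y)
      rw [hc]; linarith
  have hfbd : ∀ y, f y (π y) ≤ 2 * C + c := by
    intro y
    have h := hstep y
    have h1 := hVsintbd y (π y)
    have h2 := hC y
    rw [abs_le] at h1 h2
    split_ifs at h with hy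
    · linarith [h1.1, h2.2]
    · linarith [h1.1, h2.2]
  -- trajectory facts
  set Y := trajOn F π x ξ with hYdef
  have hYsucc : ∀ k ω, Y (k + 1) ω = F (Y k ω) (π (Y k ω)) (ξ k ω) := fun k ω => rfl
  have hY0 : ∀ ω, Y 0 ω = x := fun ω => rfl
  have hstepmeas : Measurable fun p : X × W => F p.1 (π p.1) p.2 :=
    hFmeas.comp (measurable_fst.prodMk ((hπmeas.comp measurable_fst).prodMk measurable_snd))
  have hYmeas : ∀ k, Measurable (Y k) := by
    intro k
    exact (measurable_traj hFmeas hπmeas x k).comp (measurable_pi_lambda _ hξmeas)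
  have habs : ∀ ω k m, k ≤ m → Y k ω = t → Y m ω = t := by
    intro ω k m hkm hk
    induction m, hkm using Nat.le_induction with
    | base => exact hk
    | succ m hm ih => rw [hYsucc, ih, hπt]; exact hFt _
  have hlt_iff : ∀ (ω : Ω) (k : ℕ), ((k : ℝ≥0∞) < hitTime t Y ω ↔ Y k ω ≠ t) := by
    intro ω k
    constructor
    · intro h hk
      have hle : hitTime t Y ω ≤ k := by
        rw [hitTime]
        exact iInf_le_of_le k (by simp [hk])
      exact absurd h (not_lt.2 hle)
    · intro hk
      have h1 : ((k : ℝ≥0∞) + 1) ≤ hitTime t Y ω := by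
        rw [hitTime]
        refine le_iInf fun j => le_iInf fun hj => ?_
        have hkj : k < j := by
          by_contra hcon
          push_neg at hcon
          exact hk (habs ω j k hcon hj)
        have : ((k + 1 : ℕ) : ℝ≥0∞) ≤ (j : ℝ≥0∞) := by exact_mod_cast hkj
        simpa using this
      calc (k : ℝ≥0∞) < (k : ℝ≥0∞) + 1 :=
            ENNReal.lt_add_right (by simp) one_ne_zero
        _ ≤ _ := h1
  have hhit_top : ∀ ω, (∀ k, Y k ω ≠ t) → hitTime t Y ω = ⊤ := by
    intro ω h
    rw [hitTime]
    simp [h]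
  have hhit_eq : ∀ ω, hitTime t Y ω = ∑' k : ℕ, (if Y k ω = t then 0 else 1 : ℝ≥0∞) := by
    intro ω
    by_cases hfin : ∃ k, Y k ω = t
    · have hYn : Y (Nat.find hfin) ω = t := Nat.find_spec hfin
      set n := Nat.find hfin with hn
      have hltn : ∀ j < n, Y j ω ≠ t := fun j hj => Nat.find_min hfin hj
      have h1 : hitTime t Y ω = n := by
        apply le_antisymm
        · rw [hitTime]; exact iInf_le_of_le n (by simp [hYn])
        · rw [hitTime]
          refine le_iInf fun j => le_iInf fun hj => ?_
          exact_mod_cast Nat.find_min' hfin hj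
      rw [h1]
      have h2 : (∑' k : ℕ, (if Y k ω = t then 0 else 1 : ℝ≥0∞))
          = ∑ k ∈ Finset.range n, (1 : ℝ≥0∞) := by
        rw [tsum_eq_sum (s := Finset.range n) ?_]
        · exact Finset.sum_congr rfl fun k hk => by
            simp [hltn k (Finset.mem_range.1 hk)]
        · intro k hk
          have hnk : n ≤ k := not_lt.1 (fun h => hk (Finset.mem_range.2 h))
          simp [habs ω n k hnk hYn]
      rw [h2]; simp
    · push_neg at hfin
      rw [hhit_top ω hfin]
      have : (∑' _k : ℕ, (1 : ℝ≥0∞)) = ⊤ := ENNReal.tsum_const_eq_top_of_ne_zero one_ne_zero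
      simp [hfin, this]
  have hset_meas : ∀ k, MeasurableSet {ω | Y k ω = t} :=
    fun k => (hYmeas k) (measurableSet_singleton t)
  have hsne_meas : ∀ k, MeasurableSet {ω | Y k ω ≠ t} :=
    fun k => (hset_meas k).compl
  have hexp : expHit P t Y = ∑' k : ℕ, P {ω | Y k ω ≠ t} := by
    rw [expHit, lintegral_congr hhit_eq,
      lintegral_tsum (f := fun (k : ℕ) (ω : Ω) => if Y k ω = t then 0 else 1)
        (fun k => (Measurable.ite (hset_meas k)
          measurable_const measurable_const).aemeasurable)]
    congr 1
    funext k
    have : ∀ ω, (if Y k ω = t then 0 else 1 : ℝ≥0∞)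
        = {ω | Y k ω ≠ t}.indicator 1 ω := by
      intro ω
      by_cases h : Y k ω = t <;> simp [Set.indicator_apply, h]
    rw [lintegral_congr this, lintegral_indicator_one (hsne_meas k)]
  -- per-step quantities
  set fk : ℕ → Ω → ℝ := fun k ω => f (Y k ω) (π (Y k ω)) with hfkdef
  have hfkmeas : ∀ k, Measurable (fk k) :=
    fun k => hfmeas.comp ((hYmeas k).prodMk (hπmeas.comp (hYmeas k)))
  have hfknn : ∀ k ω, 0 ≤ fk k ω := fun k ω => hfnn _ _
  have hfkbd : ∀ k ω, |fk k ω| ≤ 2 * C + c := fun k ω => by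
    rw [abs_of_nonneg (hfknn k ω)]; exact hfbd _
  have hfkint : ∀ k, Integrable (fk k) P :=
    fun k => integrable_of_bound _ (hfkmeas k).aestronglyMeasurable _ (hfkbd k)
  set a : ℕ → ℝ := fun k => ∫ ω, fk k ω ∂P with hadef
  have hann : ∀ k, 0 ≤ a k := fun k => integral_nonneg (hfknn k)
  set v : ℕ → ℝ := fun k => ∫ ω, Vstar (Y k ω) ∂P with hvdef
  set p : ℕ → ℝ := fun k => (P {ω | Y k ω ≠ t}).toReal with hpdef
  have hpnn : ∀ k, 0 ≤ p k := fun k => ENNReal.toReal_nonneg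
  set g : X → ℝ := fun y => ∫ w, Vstar (F y (π y) w) ∂μ with hgdef
  have hgsm : StronglyMeasurable g := by
    have hm : Measurable fun q : X × W => Vstar (F q.1 (π q.1) q.2) := hVsmeas.comp hstepmeas
    exact hm.stronglyMeasurable.integral_prod_right'
  have hgbd : ∀ y, |g y| ≤ C := fun y => hVsintbd y (π y)
  have hVsYint : ∀ k, Integrable (fun ω => Vstar (Y k ω)) P := fun k =>
    integrable_of_bound _ ((hVsmeas.comp (hYmeas k)).aestronglyMeasurable) C (fun ω => hC _)
  have hgYint : ∀ k, Integrable (fun ω => g (Y k ω)) P := fun k =>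
    integrable_of_bound _ ((hgsm.measurable.comp (hYmeas k)).aestronglyMeasurable) C
      (fun ω => hgbd _)
  -- conditional step via independence
  haveI hWne : Nonempty W := by
    by_contra h
    rw [not_nonempty_iff] at h
    have h1 : μ Set.univ = 1 := measure_univ
    rw [Set.univ_eq_empty_iff.2 h, measure_empty] at h1
    exact zero_ne_one h1
  have hcond : ∀ k, ∫ ω, Vstar (Y (k + 1) ω) ∂P = ∫ ω, g (Y k ω) ∂P := by
    intro k
    -- independence of Y k and ξ k
    have hindepfin := hξindep.indepFun_finset (Finset.range k) {k}
      (by simp [Finset.disjoint_left]; omega) hξmeas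
    set ext : (↥(Finset.range k) → W) → (ℕ → W) :=
      fun val i => if h : i ∈ Finset.range k then val ⟨i, h⟩ else Classical.arbitrary W with hextdef
    have hextmeas : Measurable ext := by
      apply measurable_pi_lambda
      intro i
      by_cases h : i ∈ Finset.range k
      · simp only [hextdef, dif_pos h]
        exact measurable_pi_apply _
      · simp only [hextdef, dif_neg h]
        exact measurable_const
    set φ : (↥(Finset.range k) → W) → X := fun val => traj F π x (ext val) k with hφdef
    have hφmeas : Measurable φ := (measurable_traj hFmeas hπmeas x k).comp hextmeas
    have hevalmeas : Measurable fun val : (↥({k} : Finset ℕ) → W) =>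
        val ⟨k, Finset.mem_singleton_self k⟩ := measurable_pi_apply _
    have hYrep : Y k = φ ∘ (fun ω (i : ↥(Finset.range k)) => ξ (i : ℕ) ω) := by
      funext ω
      show traj F π x (fun i => ξ i ω) k = traj F π x (ext fun i => ξ (i : ℕ) ω) k
      apply traj_congr
      intro i hi
      simp [hextdef, hi]
    have hξrep : ξ k = (fun val : (↥({k} : Finset ℕ) → W) => val ⟨k, Finset.mem_singleton_self k⟩)
        ∘ (fun ω (i : ↥({k} : Finset ℕ)) => ξ (i : ℕ) ω) := by
      funext ω; rfl
    have hindep : IndepFun (Y k) (ξ k) P := by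
      rw [hYrep, hξrep]
      exact hindepfin.comp hφmeas hevalmeas
    have hpair : P.map (fun ω => (Y k ω, ξ k ω)) = (P.map (Y k)).prod μ := by
      rw [← hξlaw k]
      exact (indepFun_iff_map_prod_eq_prod_map_map (hYmeas k).aemeasurable
        (hξmeas k).aemeasurable).1 hindep
    haveI : IsProbabilityMeasure (P.map (Y k)) :=
      Measure.isProbabilityMeasure_map (hYmeas k).aemeasurable
    set h : X × W → ℝ := fun q => Vstar (F q.1 (π q.1) q.2) with hhdef
    have hhmeas : Measurable h := hVsmeas.comp hstepmeas
    have hhint : Integrable h ((P.map (Y k)).prod μ) :=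
      integrable_of_bound _ hhmeas.aestronglyMeasurable C (fun q => hC _)
    have hpairmeas : Measurable fun ω => (Y k ω, ξ k ω) := (hYmeas k).prodMk (hξmeas k)
    calc ∫ ω, Vstar (Y (k + 1) ω) ∂P = ∫ ω, h (Y k ω, ξ k ω) ∂P := rfl
      _ = ∫ q, h q ∂(P.map fun ω => (Y k ω, ξ k ω)) :=
          (integral_map hpairmeas.aemeasurable hhmeas.aestronglyMeasurable).symm
      _ = ∫ q, h q ∂((P.map (Y k)).prod μ) := by rw [hpair]
      _ = ∫ y, ∫ w, h (y, w) ∂μ ∂(P.map (Y k)) := integral_prod h hhint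
      _ = ∫ y, g y ∂(P.map (Y k)) := rfl
      _ = ∫ ω, g (Y k ω) ∂P := integral_map (hYmeas k).aemeasurable hgsm.aestronglyMeasurable
  -- per-step integrated inequality
  have hper : ∀ k, a k + ∫ ω, Vstar (Y (k + 1) ω) ∂P ≤ v k + c * p k := by
    intro k
    rw [hcond k]
    have hind_eq : ∀ ω, (if Y k ω = t then 0 else c)
        = {ω | Y k ω ≠ t}.indicator (fun _ => c) ω := by
      intro ω; by_cases h : Y k ω = t <;> simp [Set.indicator_apply, h]
    have hindint : Integrable (fun ω => (if Y k ω = t then (0:ℝ) else c)) P := by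
      rw [show (fun ω => (if Y k ω = t then (0:ℝ) else c))
         = {ω | Y k ω ≠ t}.indicator (fun _ => c) from funext hind_eq]
      exact (integrable_const c).indicator (hsne_meas k)
    have hmono : ∫ ω, (fk k ω + g (Y k ω)) ∂P
        ≤ ∫ ω, (Vstar (Y k ω) + (if Y k ω = t then (0:ℝ) else c)) ∂P :=
      integral_mono ((hfkint k).add (hgYint k))
        ((hVsYint k).add hindint) (fun ω => hstep (Y k ω))
    rw [integral_add (hfkint k) (hgYint k), integral_add (hVsYint k) hindint] at hmono
    have hindval : ∫ ω, (if Y k ω = t then (0:ℝ) else c) ∂P = c * p k := by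
      rw [show (fun ω => (if Y k ω = t then (0:ℝ) else c))
         = {ω | Y k ω ≠ t}.indicator (fun _ => c) from funext hind_eq,
        integral_indicator_const c (hsne_meas k)]
      simp [hpdef, mul_comm, Measure.real]
    rw [hindval] at hmono
    exact hmono
  -- telescoping
  have htel : ∀ n, (∑ k ∈ Finset.range n, a k) + v n
      ≤ Vstar x + c * ∑ k ∈ Finset.range n, p k := by
    intro n
    induction n with
    | zero =>
      have : v 0 = Vstar x := by
        rw [hvdef]
        simp only []
        have : (fun ω => Vstar (Y 0 ω)) = fun _ => Vstar x := funext fun ω => by rw [hY0]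
        rw [this, integral_const, probReal_univ, one_smul]
      simp [this]
    | succ n ih =>
      have h1 := hper n
      rw [Finset.sum_range_succ, Finset.sum_range_succ]
      have hvn1 : v (n + 1) = ∫ ω, Vstar (Y (n + 1) ω) ∂P := rfl
      rw [mul_add]
      linarith [h1, ih]
  -- v n → 0
  have hvlim : Tendsto v atTop (nhds 0) := by
    have h0 : (0:ℝ) = ∫ _ω, (0:ℝ) ∂P := by simp
    rw [h0]
    apply tendsto_integral_of_dominated_convergence (fun _ => C)
      (fun n => (hVsmeas.comp (hYmeas n)).aestronglyMeasurable)
      (integrable_const C)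
      (fun n => Eventually.of_forall fun ω => by
        simpa [Real.norm_eq_abs] using hC (Y n ω))
    filter_upwards [hproper_tau] with ω hω
    have hfin : ∃ k, Y k ω = t := by
      by_contra h
      push_neg at h
      rw [hhit_top ω h] at hω
      exact absurd hω (lt_irrefl _)
    obtain ⟨k, hk⟩ := hfin
    apply tendsto_atTop_of_eventually_const (i₀ := k)
    intro m hm
    show Vstar (Y m ω) = 0
    rw [habs ω k m hm hk, hVst]
  -- totalCost as a sum
  have hTC : totalCost P t f π Y = ∑' k : ℕ, ENNReal.ofReal (a k) := by
    rw [totalCost]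
    have h1 : ∀ ω, (∑' k : ℕ, (if (k : ℝ≥0∞) < hitTime t Y ω
        then ENNReal.ofReal (f (Y k ω) (π (Y k ω))) else 0))
        = ∑' k : ℕ, ENNReal.ofReal (fk k ω) := by
      intro ω
      apply tsum_congr
      intro k
      by_cases h : (k : ℝ≥0∞) < hitTime t Y ω
      · rw [if_pos h]
      · rw [if_neg h]
        have hYk : Y k ω = t := by
          by_contra hne
          exact h ((hlt_iff ω k).2 hne)
        have : fk k ω = 0 := by rw [hfkdef]; simp only []; rw [hYk, hπt, hft]
        rw [this]
        simp
    rw [lintegral_congr h1,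
      lintegral_tsum (f := fun (k : ℕ) (ω : Ω) => ENNReal.ofReal (fk k ω))
        (fun k => ((hfkmeas k).ennreal_ofReal).aemeasurable)]
    congr 1
    funext k
    exact (ofReal_integral_eq_lintegral_ofReal (hfkint k)
      (Eventually.of_forall (hfknn k))).symm
  have hTCne : totalCost P t f π Y ≠ ⊤ := hproper_J.ne
  have hasum : HasSum a (totalCost P t f π Y).toReal := by
    have hne : (∑' k : ℕ, ENNReal.ofReal (a k)) ≠ ⊤ := by rw [← hTC]; exact hTCne
    have h2 : ∀ k, (ENNReal.ofReal (a k)).toReal = a k :=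
      fun k => ENNReal.toReal_ofReal (hann k)
    rw [hTC, ENNReal.tsum_toReal_eq (fun k => ENNReal.ofReal_ne_top)]
    have h := ENNReal.hasSum_toReal hne
    simpa only [h2] using h
  have halim : Tendsto (fun n => ∑ k ∈ Finset.range n, a k) atTop
      (nhds (totalCost P t f π Y).toReal) := hasum.tendsto_sum_nat
  -- partial p sums bounded by expHit
  have hpsum : ∀ n, ENNReal.ofReal (∑ k ∈ Finset.range n, p k) ≤ expHit P t Y := by
    intro n
    rw [hexp]
    calc ENNReal.ofReal (∑ k ∈ Finset.range n, p k)
        = ∑ k ∈ Finset.range n, ENNReal.ofReal (p k) :=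
          ENNReal.ofReal_sum_of_nonneg (fun k _ => hpnn k)
      _ = ∑ k ∈ Finset.range n, P {ω | Y k ω ≠ t} := by
          refine Finset.sum_congr rfl fun k _ => ?_
          rw [hpdef]
          exact ENNReal.ofReal_toReal (measure_ne_top P _)
      _ ≤ ∑' k : ℕ, P {ω | Y k ω ≠ t} := ENNReal.sum_le_tsum _
  -- conclusion
  set R := ENNReal.ofReal (2 * ε + η) * expHit P t Y with hRdef
  by_cases hR : R = ⊤
  · rw [hR]
    rw [EReal.coe_ennreal_top, EReal.coe_add_top]
    exact le_top
  · have hcR : ∀ n, c * (∑ k ∈ Finset.range n, p k) ≤ R.toReal := by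
      intro n
      have h1 : ENNReal.ofReal (c * ∑ k ∈ Finset.range n, p k) ≤ R := by
        rw [ENNReal.ofReal_mul hc0, hRdef, hc]
        exact mul_le_mul_right (hpsum n) _
      have h2 := ENNReal.toReal_mono hR h1
      rwa [ENNReal.toReal_ofReal (mul_nonneg hc0 (Finset.sum_nonneg fun k _ => hpnn k))] at h2
    have hreal : (totalCost P t f π Y).toReal ≤ Vstar x + R.toReal := by
      have hglim : Tendsto (fun n => Vstar x + R.toReal - v n) atTop
          (nhds (Vstar x + R.toReal)) := by
        have := (tendsto_const_nhds (x := Vstar x + R.toReal) (f := atTop (α := ℕ))).sub hvlim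
        simpa using this
      refine le_of_tendsto_of_tendsto' halim hglim fun n => ?_
      have h1 := htel n
      have h2 := hcR n
      linarith
    have hL : (totalCost P t f π Y : EReal) = ((totalCost P t f π Y).toReal : EReal) := by
      conv_lhs => rw [← ENNReal.ofReal_toReal hTCne]
      rw [EReal.coe_ennreal_ofReal, max_eq_left ENNReal.toReal_nonneg]
    have hRe : ((R : ℝ≥0∞) : EReal) = (R.toReal : EReal) := by
      conv_lhs => rw [← ENNReal.ofReal_toReal hR]
      rw [EReal.coe_ennreal_ofReal, max_eq_left ENNReal.toReal_nonneg]
    rw [hL]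
    show ((totalCost P t f π Y).toReal : EReal) ≤ (Vstar x : EReal) + ((R : ℝ≥0∞) : EReal)
    rw [hRe, ← EReal.coe_add]
    exact_mod_cast hreal
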